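/- Let T = |χ_λ⟩⟨χ_λ| with χ_λ = α_λ φ_0 + β_λ ψ_0, where α_λ = (1/√d)[√((d−1)λ+1) − √(1−λ)] and β_λ = √(1−λ), 0 < λ < 1. Then tr[T U_x V_y] = α_λ² δ_{x,0} + β_λ² δ_{y,0} + (α_λ β_λ/√d)(ω^{−xy} + 1), and this is nonzero for all x, y ∈ Z_d if and only if d is odd. -/

import Mathlib

open Matrix Kronecker Finset
open scoped ComplexOrder

/-- ω = e^{2πi/d} -/
noncomputable def ww (d : ℕ) : ℂ := Complex.exp (2 * Real.pi * Complex.I / d)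

/-- shift unitary U_x φ_k = φ_{k+x} -/
noncomputable def Um (d : ℕ) (x : ZMod d) : Matrix (ZMod d) (ZMod d) ℂ :=
  fun i j => if i = j + x then 1 else 0

/-- modulation unitary V_y φ_k = ω^{yk} φ_k -/
noncomputable def Vm (d : ℕ) (y : ZMod d) : Matrix (ZMod d) (ZMod d) ℂ :=
  Matrix.diagonal fun i => ww d ^ (y * i).val

/-- finite Fourier transform F φ_k = (1/√d) Σ_h ω^{-hk} φ_h -/
noncomputable def Fm (d : ℕ) : Matrix (ZMod d) (ZMod d) ℂ :=
  fun i j => (1 / Real.sqrt d : ℂ) * (ww d)⁻¹ ^ (i * j).val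

/-- the standard orthonormal basis vector φ_k -/
noncomputable def phiV (d : ℕ) (k : ZMod d) : ZMod d → ℂ := Pi.single k 1

/-- ψ_k = F* φ_k -/
noncomputable def psiV (d : ℕ) [NeZero d] (k : ZMod d) : ZMod d → ℂ :=
  (Fm d)ᴴ.mulVec (phiV d k)

/-- A(j) = |φ_j⟩⟨φ_j| -/
noncomputable def Aob (d : ℕ) (j : ZMod d) : Matrix (ZMod d) (ZMod d) ℂ :=
  vecMulVec (phiV d j) (star (phiV d j))

/-- B(k) = |ψ_k⟩⟨ψ_k| -/
noncomputable def Bob (d : ℕ) [NeZero d] (k : ZMod d) : Matrix (ZMod d) (ZMod d) ℂ :=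
  vecMulVec (psiV d k) (star (psiV d k))

lemma ww_prim (d : ℕ) [NeZero d] : IsPrimitiveRoot (ww d) d :=
  Complex.isPrimitiveRoot_exp d (NeZero.ne d)

lemma ww_pow_d (d : ℕ) [NeZero d] : ww d ^ d = 1 := (ww_prim d).pow_eq_one

lemma ww_pow_mod (d : ℕ) [NeZero d] (n : ℕ) : ww d ^ n = ww d ^ (n % d) := by
  conv_lhs => rw [← Nat.mod_add_div n d]
  rw [pow_add, pow_mul, ww_pow_d, one_pow, mul_one]

lemma ww_neg_val (d : ℕ) [NeZero d] (z : ZMod d) :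
    ww d ^ (-z).val = (ww d ^ z.val)⁻¹ := by
  have h : ww d ^ ((-z).val + z.val) = 1 := by
    rw [ww_pow_mod, ← ZMod.val_add, neg_add_cancel, ZMod.val_zero, pow_zero]
  rw [pow_add] at h
  exact eq_inv_of_mul_eq_one_left h

lemma sum_zmod (d : ℕ) [NeZero d] (f : ZMod d → ℂ) :
    ∑ i : ZMod d, f i = ∑ k ∈ range d, f (k : ZMod d) := by
  refine Finset.sum_nbij' (fun i => ((i : ZMod d) : ZMod d).val) (fun k => ((k : ℕ) : ZMod d))
    ?_ ?_ ?_ ?_ ?_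
  · intro i _; exact mem_range.mpr (ZMod.val_lt i)
  · intro k _; exact mem_univ _
  · intro i _; exact ZMod.natCast_zmod_val i
  · intro k hk; exact ZMod.val_cast_of_lt (mem_range.mp hk)
  · intro i _; rw [ZMod.natCast_zmod_val]

lemma sum_ww (d : ℕ) [NeZero d] (y : ZMod d) :
    ∑ i : ZMod d, ww d ^ (y * i).val = if y = 0 then (d : ℂ) else 0 := by
  have hterm : ∀ i : ZMod d, ww d ^ (y * i).val = (ww d ^ y.val) ^ i.val := by
    intro i
    rw [← pow_mul, ZMod.val_mul, ← ww_pow_mod]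
  split_ifs with hy
  · subst hy; simp [hterm]
  · have hx1 : ww d ^ y.val ≠ 1 := by
      intro h
      have hdvd := ((ww_prim d).pow_eq_one_iff_dvd y.val).mp h
      have hlt := ZMod.val_lt y
      have hpos : 0 < y.val := Nat.pos_of_ne_zero (by
        intro h0; exact hy (by rw [← ZMod.natCast_zmod_val y, h0, Nat.cast_zero]))
      exact absurd (Nat.le_of_dvd hpos hdvd) (by omega)
    calc ∑ i : ZMod d, ww d ^ (y * i).val
        = ∑ k ∈ range d, (ww d ^ y.val) ^ k := by
          rw [Finset.sum_congr rfl (fun i _ => hterm i), sum_zmod]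
          exact Finset.sum_congr rfl (fun k hk => by
            rw [ZMod.val_cast_of_lt (mem_range.mp hk)])
      _ = ((ww d ^ y.val) ^ d - 1) / (ww d ^ y.val - 1) := geom_sum_eq hx1 d
      _ = 0 := by
          rw [← pow_mul, mul_comm, pow_mul, ww_pow_d, one_pow, sub_self, zero_div]

lemma psi_zero (d : ℕ) [NeZero d] (i : ZMod d) :
    psiV d 0 i = ((1 / Real.sqrt d : ℝ) : ℂ) := by
  simp only [psiV, Matrix.mulVec, dotProduct, phiV, conjTranspose_apply]
  rw [Finset.sum_eq_single 0]
  · simp [Fm, ZMod.val_zero, _root_.map_mul]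
  · intro b _ hb; simp [Pi.single_apply, hb]
  · intro h; exact absurd (Finset.mem_univ _) h

lemma trace_reduce (d : ℕ) [NeZero d] (χ : ZMod d → ℂ) (x y : ZMod d) :
    Matrix.trace (vecMulVec χ (star χ) * Um d x * Vm d y)
      = ∑ i : ZMod d, χ i * (starRingEnd ℂ) (χ (i + x)) * ww d ^ (y * i).val := by
  simp only [Matrix.trace, Matrix.diag_apply, Matrix.mul_apply, Vm, Um, vecMulVec_apply,
    Matrix.diagonal_apply, Pi.star_apply]
  refine Finset.sum_congr rfl fun i _ => ?_
  rw [Finset.sum_eq_single i]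
  · rw [if_pos rfl]
    congr 1
    rw [Finset.sum_eq_single (i + x)]
    · simp [RCLike.star_def]
    · intro b _ hb; simp [if_neg hb]
    · intro h; exact absurd (Finset.mem_univ _) h
  · intro b _ hb; simp [if_neg hb]
  · intro h; exact absurd (Finset.mem_univ _) h

lemma main_sum (d : ℕ) [NeZero d] (α β : ℝ) (x y : ZMod d)
    (χ : ZMod d → ℂ)
    (hχ : ∀ i, χ i = (α : ℂ) * (if i = 0 then 1 else 0) + (β : ℂ) * ((1 / Real.sqrt d : ℝ) : ℂ)) :
    ∑ i : ZMod d, χ i * (starRingEnd ℂ) (χ (i + x)) * ww d ^ (y * i).val =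
      (α : ℂ) ^ 2 * (if x = 0 then 1 else 0) + (β : ℂ) ^ 2 * (if y = 0 then 1 else 0) +
        ((α * β : ℝ) : ℂ) / Real.sqrt d * ((ww d)⁻¹ ^ (x * y).val + 1) := by
  have hd0 : (0:ℝ) ≤ d := Nat.cast_nonneg d
  set c : ℂ := ((β / Real.sqrt d : ℝ) : ℂ) with hc
  have hχ' : ∀ i, χ i = (α : ℂ) * (if i = 0 then 1 else 0) + c := by
    intro i; rw [hχ i, hc]; push_cast; ring
  have hconj : ∀ j, (starRingEnd ℂ) (χ j) = (α : ℂ) * (if j = 0 then 1 else 0) + c := by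
    intro j; rw [hχ' j]
    simp [hc, apply_ite (starRingEnd ℂ), Complex.conj_ofReal]
  have expand : ∀ i : ZMod d,
      χ i * (starRingEnd ℂ) (χ (i + x)) * ww d ^ (y * i).val
        = (α:ℂ)^2 * ((if i = 0 then 1 else 0) * (if i + x = 0 then 1 else 0) * ww d ^ (y*i).val)
          + (α:ℂ) * c * ((if i = 0 then 1 else 0) * ww d ^ (y*i).val)
          + (α:ℂ) * c * ((if i + x = 0 then 1 else 0) * ww d ^ (y*i).val)
          + c^2 * ww d ^ (y*i).val := by
    intro i; rw [hχ' i, hconj (i + x)]; ring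
  rw [Finset.sum_congr rfl (fun i _ => expand i)]
  rw [Finset.sum_add_distrib, Finset.sum_add_distrib, Finset.sum_add_distrib,
    ← Finset.mul_sum, ← Finset.mul_sum, ← Finset.mul_sum, ← Finset.mul_sum]
  have S1 : ∑ i : ZMod d, ((if i = 0 then (1:ℂ) else 0) * (if i + x = 0 then 1 else 0)
      * ww d ^ (y*i).val) = if x = 0 then 1 else 0 := by
    rw [Finset.sum_eq_single 0]
    · simp [ZMod.val_zero, eq_comm]
    · intro b _ hb; simp [if_neg hb]
    · intro h; exact absurd (Finset.mem_univ _) h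
  have S2 : ∑ i : ZMod d, ((if i = 0 then (1:ℂ) else 0) * ww d ^ (y*i).val) = 1 := by
    rw [Finset.sum_eq_single 0]
    · simp [ZMod.val_zero]
    · intro b _ hb; simp [if_neg hb]
    · intro h; exact absurd (Finset.mem_univ _) h
  have S3 : ∑ i : ZMod d, ((if i + x = 0 then (1:ℂ) else 0) * ww d ^ (y*i).val)
      = (ww d)⁻¹ ^ (x * y).val := by
    rw [Finset.sum_eq_single (-x)]
    · have : y * (-x) = -(x * y) := by ring
      rw [if_pos (by ring), this, ww_neg_val, inv_pow, one_mul]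
    · intro b _ hb
      rw [if_neg (fun h => hb (by linear_combination (norm := module) h)), zero_mul]
    · intro h; exact absurd (Finset.mem_univ _) h
  have S4 : ∑ i : ZMod d, ww d ^ (y*i).val = if y = 0 then (d:ℂ) else 0 := sum_ww d y
  rw [S1, S2, S3, S4]
  have hsq : ((Real.sqrt d : ℝ) : ℂ) ^ 2 = (d : ℂ) := by
    rw [← Complex.ofReal_pow, Real.sq_sqrt hd0]; norm_num
  rcases eq_or_ne d 0 with h0 | h0
  · exact absurd h0 (NeZero.ne d)
  have hsd : Real.sqrt d ≠ 0 := by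
    refine Real.sqrt_ne_zero'.mpr ?_
    exact_mod_cast Nat.pos_of_ne_zero h0
  have hsdC : ((Real.sqrt d : ℝ) : ℂ) ≠ 0 := by exact_mod_cast hsd
  have hc' : c = (β:ℂ) / ((Real.sqrt d : ℝ) : ℂ) := by rw [hc]; push_cast; ring
  have hA : (α:ℂ) * c = ((α * β : ℝ) : ℂ) / ((Real.sqrt d : ℝ) : ℂ) := by
    rw [hc']; push_cast; ring
  have hc2 : c ^ 2 * (d : ℂ) = (β:ℂ)^2 := by
    rw [hc', div_pow, hsq, div_mul_cancel₀]
    exact_mod_cast h0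
  by_cases hy : y = 0
  · rw [if_pos hy, if_pos hy]
    linear_combination hc2 + ((ww d)⁻¹ ^ (x*y).val + 1) * hA
  · rw [if_neg hy, if_neg hy]
    linear_combination ((ww d)⁻¹ ^ (x*y).val + 1) * hA

theorem optimal_joint_observable_ic_iff_odd (d : ℕ) (hd : 2 ≤ d) [NeZero d]
    (l : ℝ) (hl : 0 < l) (hl1 : l < 1) :
    let αl : ℝ := (1 / Real.sqrt d) * (Real.sqrt ((d - 1) * l + 1) - Real.sqrt (1 - l))
    let βl : ℝ := Real.sqrt (1 - l)
    let χ : ZMod d → ℂ := fun i => (αl : ℂ) * phiV d 0 i + (βl : ℂ) * psiV d 0 i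
    let T : Matrix (ZMod d) (ZMod d) ℂ := vecMulVec χ (star χ)
    (∀ x y : ZMod d,
      Matrix.trace (T * Um d x * Vm d y) =
        (αl : ℂ) ^ 2 * (if x = 0 then 1 else 0) + (βl : ℂ) ^ 2 * (if y = 0 then 1 else 0) +
          ((αl * βl : ℝ) : ℂ) / Real.sqrt d * ((ww d)⁻¹ ^ (x * y).val + 1)) ∧
    ((∀ x y : ZMod d, Matrix.trace (T * Um d x * Vm d y) ≠ 0) ↔ Odd d) := by
  intro αl βl χ T
  have hdR : (0:ℝ) < d := by exact_mod_cast (by omega : 0 < d)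
  have hsd : (0:ℝ) < Real.sqrt d := Real.sqrt_pos.mpr hdR
  have hβ : 0 < βl := Real.sqrt_pos.mpr (by linarith)
  have hα : 0 < αl := by
    have hlt : Real.sqrt (1 - l) < Real.sqrt ((d - 1) * l + 1) := by
      apply Real.sqrt_lt_sqrt (by linarith)
      have : (1:ℝ) ≤ d - 1 := by
        have : (2:ℝ) ≤ d := by exact_mod_cast hd
        linarith
      nlinarith
    have : 0 < Real.sqrt ((d - 1) * l + 1) - Real.sqrt (1 - l) := by linarith
    positivity
  have hχ : ∀ i, χ i = (αl : ℂ) * (if i = 0 then 1 else 0)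
      + (βl : ℂ) * ((1 / Real.sqrt d : ℝ) : ℂ) := by
    intro i
    show (αl : ℂ) * phiV d 0 i + (βl : ℂ) * psiV d 0 i = _
    rw [psi_zero, phiV, Pi.single_apply]
  have key : ∀ x y : ZMod d,
      Matrix.trace (T * Um d x * Vm d y) =
        (αl : ℂ) ^ 2 * (if x = 0 then 1 else 0) + (βl : ℂ) ^ 2 * (if y = 0 then 1 else 0) +
          ((αl * βl : ℝ) : ℂ) / Real.sqrt d * ((ww d)⁻¹ ^ (x * y).val + 1) := by
    intro x y
    rw [show T = vecMulVec χ (star χ) from rfl, trace_reduce, main_sum d αl βl x y χ hχ]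
  refine ⟨key, ?_, ?_⟩
  · -- nonzero → odd
    intro hall
    by_contra hodd
    have heven : Even d := Nat.not_odd_iff_even.mp hodd
    obtain ⟨k, hk⟩ := heven
    have hk1 : 1 ≤ k := by omega
    have hkd : k < d := by omega
    have hx0 : ((k : ZMod d) : ZMod d) ≠ 0 := by
      rw [Ne, ZMod.natCast_eq_zero_iff]
      intro hdvd
      exact absurd (Nat.le_of_dvd (by omega) hdvd) (by omega)
    haveI : Fact (1 < d) := ⟨hd⟩
    have h1 : (1 : ZMod d) ≠ 0 := one_ne_zero
    have hval : (((k : ZMod d)) * 1).val = k := by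
      rw [mul_one, ZMod.val_natCast, Nat.mod_eq_of_lt hkd]
    have hwk : ww d ^ k = -1 := by
      have hsq : ww d ^ k * ww d ^ k = 1 := by
        rw [← pow_add, show k + k = d by omega, ww_pow_d]
      rcases mul_self_eq_one_iff.mp hsq with h | h
      · exact absurd h ((ww_prim d).pow_ne_one_of_pos_of_lt (by omega) hkd)
      · exact h
    have h2 := hall (k : ZMod d) 1
    rw [key, if_neg hx0, if_neg h1, hval, inv_pow, hwk] at h2
    apply h2
    norm_num
  · -- odd → nonzero
    intro hodd x y
    rw [key]
    have hAC : ((αl * βl : ℝ) : ℂ) / ((Real.sqrt d : ℝ) : ℂ) ≠ 0 := by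
      apply div_ne_zero
      · exact_mod_cast (mul_pos hα hβ).ne'
      · exact_mod_cast hsd.ne'
    by_cases hx : x = 0
    · have hxy : ((x * y).val) = 0 := by rw [hx, zero_mul, ZMod.val_zero]
      rw [if_pos hx, hxy, pow_zero]
      by_cases hy : y = 0
      · rw [if_pos hy]
        have : ((αl:ℂ)^2 * 1 + (βl:ℂ)^2 * 1 + ((αl * βl : ℝ) : ℂ) / Real.sqrt d * (1 + 1))
            = (((αl^2 + βl^2 + αl * βl / Real.sqrt d * 2 : ℝ)) : ℂ) := by
          push_cast; ring
        rw [this]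
        exact_mod_cast (by positivity : (0:ℝ) < αl^2 + βl^2 + αl * βl / Real.sqrt d * 2).ne'
      · rw [if_neg hy]
        have : ((αl:ℂ)^2 * 1 + (βl:ℂ)^2 * 0 + ((αl * βl : ℝ) : ℂ) / Real.sqrt d * (1 + 1))
            = (((αl^2 + αl * βl / Real.sqrt d * 2 : ℝ)) : ℂ) := by
          push_cast; ring
        rw [this]
        exact_mod_cast (by positivity : (0:ℝ) < αl^2 + αl * βl / Real.sqrt d * 2).ne'
    · rw [if_neg hx]
      by_cases hy : y = 0
      · have hxy : ((x * y).val) = 0 := by rw [hy, mul_zero, ZMod.val_zero]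
        rw [if_pos hy, hxy, pow_zero]
        have : ((αl:ℂ)^2 * 0 + (βl:ℂ)^2 * 1 + ((αl * βl : ℝ) : ℂ) / Real.sqrt d * (1 + 1))
            = (((βl^2 + αl * βl / Real.sqrt d * 2 : ℝ)) : ℂ) := by
          push_cast; ring
        rw [this]
        exact_mod_cast (by positivity : (0:ℝ) < βl^2 + αl * βl / Real.sqrt d * 2).ne'
      · rw [if_neg hy]
        have hu : (ww d)⁻¹ ^ (x * y).val + 1 ≠ 0 := by
          intro h
          have hwm : ww d ^ (x * y).val = -1 := by
            rw [inv_pow] at h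
            have h' : (ww d ^ (x * y).val)⁻¹ = -1 := by linear_combination h
            rw [← inv_inv (ww d ^ (x * y).val), h']
            norm_num
          have h2 : ww d ^ ((x * y).val * 2) = 1 := by
            rw [pow_mul, hwm]; norm_num
          have hdvd : d ∣ (x * y).val * 2 := ((ww_prim d).pow_eq_one_iff_dvd _).mp h2
          have hcop : Nat.Coprime d 2 := Nat.coprime_two_right.mpr hodd
          have hdvd' : d ∣ (x * y).val := hcop.dvd_of_dvd_mul_right hdvd
          have : ww d ^ (x * y).val = 1 := ((ww_prim d).pow_eq_one_iff_dvd _).mpr hdvd'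
          rw [this] at hwm
          norm_num at hwm
        have heq : (αl:ℂ)^2 * 0 + (βl:ℂ)^2 * 0
            + ((αl * βl : ℝ) : ℂ) / Real.sqrt d * ((ww d)⁻¹ ^ (x * y).val + 1)
            = ((αl * βl : ℝ) : ℂ) / Real.sqrt d * ((ww d)⁻¹ ^ (x * y).val + 1) := by ring
        rw [heq]
        exact mul_ne_zero hAC hu
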